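/- Let b₁, b₂, b₃ : I → ℝ on an interval I and let u, u₁, u₂, u₃ : I → ℝ be four differentiable solutions of the Riccati equation u'(t) = b₁(t) + b₂(t)u(t) + b₃(t)u(t)², such that (u(t) − u₂(t))·(u₁(t) − u₃(t)) ≠ 0 for all t ∈ I. Then the cross-ratio t ↦ (u(t) − u₁(t))(u₂(t) − u₃(t)) / ((u(t) − u₂(t))(u₁(t) − u₃(t))) is constant on I. (The level sets of this cross-ratio define the superposition foliation for the Riccati equation.) -/

import Mathlib

/-- The cross-ratio of four solutions of the Riccati equation
`u' = b₁ + b₂u + b₃u²` is constant on the interval `I`, provided the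
denominator `(u − u₂)(u₁ − u₃)` never vanishes on `I`. -/
theorem stmt_15 (I : Set ℝ) (hI : I.OrdConnected) (b₁ b₂ b₃ : ℝ → ℝ)
    (u u₁ u₂ u₃ : ℝ → ℝ)
    (hu : ∀ t ∈ I, HasDerivAt u (b₁ t + b₂ t * u t + b₃ t * u t ^ 2) t)
    (hu₁ : ∀ t ∈ I, HasDerivAt u₁ (b₁ t + b₂ t * u₁ t + b₃ t * u₁ t ^ 2) t)
    (hu₂ : ∀ t ∈ I, HasDerivAt u₂ (b₁ t + b₂ t * u₂ t + b₃ t * u₂ t ^ 2) t)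
    (hu₃ : ∀ t ∈ I, HasDerivAt u₃ (b₁ t + b₂ t * u₃ t + b₃ t * u₃ t ^ 2) t)
    (hne : ∀ t ∈ I, (u t - u₂ t) * (u₁ t - u₃ t) ≠ 0) :
    ∀ s ∈ I, ∀ t ∈ I,
      (u s - u₁ s) * (u₂ s - u₃ s) / ((u s - u₂ s) * (u₁ s - u₃ s))
        = (u t - u₁ t) * (u₂ t - u₃ t) / ((u t - u₂ t) * (u₁ t - u₃ t)) := by
  set f : ℝ → ℝ := fun t =>
    (u t - u₁ t) * (u₂ t - u₃ t) / ((u t - u₂ t) * (u₁ t - u₃ t)) with hf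
  have key : ∀ x ∈ I, HasDerivAt f 0 x := by
    intro x hx
    have hN : HasDerivAt (fun t => (u t - u₁ t) * (u₂ t - u₃ t))
        ((u x - u₁ x) * (u₂ x - u₃ x) *
          (2 * b₂ x + b₃ x * (u x + u₁ x + u₂ x + u₃ x))) x := by
      have h := ((hu x hx).sub (hu₁ x hx)).mul ((hu₂ x hx).sub (hu₃ x hx))
      exact h.congr_deriv (by simp only [Pi.sub_apply]; ring)
    have hD : HasDerivAt (fun t => (u t - u₂ t) * (u₁ t - u₃ t))
        ((u x - u₂ x) * (u₁ x - u₃ x) *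
          (2 * b₂ x + b₃ x * (u x + u₁ x + u₂ x + u₃ x))) x := by
      have h := ((hu x hx).sub (hu₂ x hx)).mul ((hu₁ x hx).sub (hu₃ x hx))
      exact h.congr_deriv (by simp only [Pi.sub_apply]; ring)
    have h := hN.div hD (hne x hx)
    refine h.congr_deriv ?_
    rw [div_eq_zero_iff]
    left; ring
  intro s hs t ht
  wlog hst : s ≤ t generalizing s t
  · exact (this t ht s hs (le_of_not_ge hst)).symm
  have hsub : Set.Icc s t ⊆ I := hI.out hs ht
  have := constant_of_has_deriv_right_zero
    (f := f)
    (fun x hx => (key x (hsub hx)).continuousAt.continuousWithinAt)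
    (fun x hx => (key x (hsub (Set.mem_Icc_of_Ico hx))).hasDerivWithinAt)
    t (Set.right_mem_Icc.mpr hst)
  exact this.symm
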